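/- In the free group on x and z, the pair of relators obtained from {x²y⁻¹xy⁻¹x²y⁻¹, x³y⁻²} under the substitution y = x²z⁻¹ normally generates the whole free group. -/

import Mathlib

/-- In the free group on `x` and `z`, with `y := x²z⁻¹`, the relators
`x²y⁻¹xy⁻¹x²y⁻¹` and `x³y⁻²` normally generate the whole free group; that is,
the presented group `⟨x, z | x²y⁻¹xy⁻¹x²y⁻¹, x³y⁻²⟩` (with `y = x²z⁻¹`)
is trivial. -/
theorem substituted_relators_normally_generate :
    let x : FreeGroup (Fin 2) := FreeGroup.of 0
    let z : FreeGroup (Fin 2) := FreeGroup.of 1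
    let y := x ^ 2 * z⁻¹
    Subgroup.normalClosure
      ({x ^ 2 * y⁻¹ * x * y⁻¹ * x ^ 2 * y⁻¹, x ^ 3 * y⁻¹ ^ 2} :
        Set (FreeGroup (Fin 2))) = ⊤ := by
  intro x z y
  set r1 : FreeGroup (Fin 2) := x ^ 2 * y⁻¹ * x * y⁻¹ * x ^ 2 * y⁻¹ with hr1
  set r2 : FreeGroup (Fin 2) := x ^ 3 * y⁻¹ ^ 2 with hr2
  set N := Subgroup.normalClosure ({r1, r2} : Set (FreeGroup (Fin 2))) with hNdef
  have hN : N.Normal := Subgroup.normalClosure_normal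
  have h1 : r1 ∈ N := Subgroup.subset_normalClosure (Set.mem_insert _ _)
  have h2 : r2 ∈ N := Subgroup.subset_normalClosure (Set.mem_insert_of_mem _ rfl)
  -- pass to the quotient
  let f := QuotientGroup.mk' N
  have key : ∀ g, g ∈ N → f g = 1 := fun g hg => (QuotientGroup.eq_one_iff g).mpr hg
  -- x⁻¹ z³ is a conjugate of r1
  have hs : x⁻¹ * z ^ 3 ∈ N := by
    have hc := hN.conj_mem r1 h1 (z⁻¹ * x⁻¹ ^ 2)
    have heq : x⁻¹ * z ^ 3 = z⁻¹ * x⁻¹ ^ 2 * r1 * (z⁻¹ * x⁻¹ ^ 2)⁻¹ := by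
      rw [hr1]; show _ = _ * (x ^ 2 * (x ^ 2 * z⁻¹)⁻¹ * x * (x ^ 2 * z⁻¹)⁻¹ * x ^ 2 *
        (x ^ 2 * z⁻¹)⁻¹) * _
      group
      simp [pow_succ, mul_assoc]
    rw [heq]; exact hc
  have hx3 : f x = f z ^ 3 := by
    have := key _ hs
    rw [map_mul, map_inv, map_pow] at this
    have h := congrArg (fun t => f x * t) this
    simpa [mul_assoc] using h.symm
  have hfr2 : f x ^ 3 * ((f x ^ 2 * (f z)⁻¹)⁻¹) ^ 2 = 1 := by
    have := key _ h2
    rw [hr2] at this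
    show f x ^ 3 * ((f (x ^ 2 * z⁻¹))⁻¹) ^ 2 = 1
    rw [← map_pow, ← map_inv, ← map_pow, ← map_mul]
    exact this
  have hz1 : f z = 1 := by
    rw [hx3] at hfr2
    have : (f z)⁻¹ = 1 := by rw [← hfr2]; group
    simpa using this
  have hzN : z ∈ N := (QuotientGroup.eq_one_iff z).mp hz1
  have hxN : x ∈ N := by
    have : f x = 1 := by rw [hx3, hz1, one_pow]
    exact (QuotientGroup.eq_one_iff x).mp this
  rw [eq_top_iff, ← FreeGroup.closure_range_of, Subgroup.closure_le]
  rintro g ⟨i, rfl⟩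
  fin_cases i
  · exact hxN
  · exact hzN
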